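/- arXiv:1409.3975 — 3 statements merged into one kernel-verified Lean document; each statement's English description precedes it below -/
import Mathlib

section
/- Fix a unit vector v₀ ∈ EuclideanSpace ℝ (Fin 3). For A ∈ SO(3), the fixed point set of A on the unit sphere equals exactly the two-point set {v₀, -v₀} if and only if A v₀ = v₀ and A ≠ 1. In other words, the elements of SO(3) acting on S² with fixed point set exactly {v₀, -v₀} are precisely the non-identity rotations about the axis through v₀. -/
open Matrix

private lemma cross_key (M : Matrix (Fin 3) (Fin 3) ℝ) (u v : Fin 3 → ℝ) :
    Mᵀ.mulVec ((M.mulVec u) ⨯₃ (M.mulVec v)) = M.det • (u ⨯₃ v) := by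
  ext i
  fin_cases i <;>
    simp [crossProduct, mulVec, dotProduct, det_fin_three, Fin.sum_univ_three,
      Matrix.transpose_apply] <;> ring

private lemma det_rows (u v : Fin 3 → ℝ) :
    Matrix.det ![u, v, u ⨯₃ v] = (u ⨯₃ v) ⬝ᵥ (u ⨯₃ v) := by
  rw [det_fin_three (A := (![u, v, u ⨯₃ v] : Matrix (Fin 3) (Fin 3) ℝ))]
  simp [det_fin_three, crossProduct, dotProduct, Fin.sum_univ_three]
  ring

/-- If `M` fixes columns of an invertible matrix, `M = 1`. -/
private lemma fix_basis (M : Matrix (Fin 3) (Fin 3) ℝ) (u v w : Fin 3 → ℝ)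
    (hdet : Matrix.det ![u, v, w] ≠ 0)
    (hu : M.mulVec u = u) (hv : M.mulVec v = v) (hw : M.mulVec w = w) : M = 1 := by
  have hP : M * (![u, v, w] : Matrix (Fin 3) (Fin 3) ℝ)ᵀ = 1 * (![u, v, w])ᵀ := by
    rw [Matrix.one_mul]
    ext i j
    have : (M * (![u, v, w])ᵀ) i j = (M.mulVec (![u, v, w] j)) i := by
      simp [Matrix.mul_apply, Matrix.mulVec, dotProduct, Matrix.transpose_apply (M := (![u, v, w] : Matrix (Fin 3) (Fin 3) ℝ))]
    rw [this]
    fin_cases j <;> simp [hu, hv, hw, Matrix.transpose_apply] <;> rfl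
  have hUnit : IsUnit ((![u, v, w] : Matrix (Fin 3) (Fin 3) ℝ)ᵀ) := by
    rw [Matrix.isUnit_iff_isUnit_det, Matrix.det_transpose (M := (![u, v, w] : Matrix (Fin 3) (Fin 3) ℝ))]
    exact (isUnit_iff_ne_zero).2 hdet
  exact hUnit.mul_right_cancel hP

/-- The elements of `SO(3)` whose fixed point set on the unit sphere is exactly the
antipodal pair `{v₀, -v₀}` are precisely the non-identity rotations about the axis
through the unit vector `v₀`. -/
theorem SO3_fixedPoints_eq_pair_iff
    (v₀ : EuclideanSpace ℝ (Fin 3)) (hv₀ : ‖v₀‖ = 1)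
    (A : Matrix.specialOrthogonalGroup (Fin 3) ℝ) :
    {x : EuclideanSpace ℝ (Fin 3) | ‖x‖ = 1 ∧ (A : Matrix (Fin 3) (Fin 3) ℝ).mulVec x = x}
        = {v₀, -v₀} ↔
      (A : Matrix (Fin 3) (Fin 3) ℝ).mulVec v₀ = v₀ ∧ A ≠ 1 := by
  set M : Matrix (Fin 3) (Fin 3) ℝ := (A : Matrix (Fin 3) (Fin 3) ℝ) with hM
  have hmem := A.2
  rw [Matrix.mem_specialOrthogonalGroup_iff] at hmem
  have horth : M * Mᵀ = 1 := by
    have := (Matrix.mem_orthogonalGroup_iff (Fin 3) ℝ).1 hmem.1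
    simpa using this
  have hdet : M.det = 1 := hmem.2
  constructor
  · intro h
    have hv : v₀ ∈ {x : EuclideanSpace ℝ (Fin 3) | ‖x‖ = 1 ∧ M.mulVec x = x} := by
      rw [h]; exact Set.mem_insert _ _
    refine ⟨hv.2, ?_⟩
    rintro rfl
    have h0 : (EuclideanSpace.single 0 1 : EuclideanSpace ℝ (Fin 3)) ∈ ({v₀, -v₀} : Set _) := by
      rw [← h]
      exact ⟨EuclideanSpace.norm_single 0 1 |>.trans (by norm_num), Matrix.one_mulVec _⟩
    have h1 : (EuclideanSpace.single 1 1 : EuclideanSpace ℝ (Fin 3)) ∈ ({v₀, -v₀} : Set _) := by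
      rw [← h]
      exact ⟨EuclideanSpace.norm_single 1 1 |>.trans (by norm_num), Matrix.one_mulVec _⟩
    rcases h0 with h0 | h0 <;> rcases h1 with h1 | h1
    · have h2 := congrArg (fun f : EuclideanSpace ℝ (Fin 3) => f 0) (h0.trans h1.symm)
      simp [EuclideanSpace.single_apply] at h2
    · have h3 : (EuclideanSpace.single 0 1 : EuclideanSpace ℝ (Fin 3)) =
          -(EuclideanSpace.single 1 1) := by rw [h0, h1, neg_neg]
      have h2 := congrArg (fun f : EuclideanSpace ℝ (Fin 3) => f 0) h3
      simp [EuclideanSpace.single_apply] at h2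
    · have h3 : (EuclideanSpace.single 0 1 : EuclideanSpace ℝ (Fin 3)) =
          -(EuclideanSpace.single 1 1) := by rw [h0, ← h1]
      have h2 := congrArg (fun f : EuclideanSpace ℝ (Fin 3) => f 0) h3
      simp [EuclideanSpace.single_apply] at h2
    · have h2 := congrArg (fun f : EuclideanSpace ℝ (Fin 3) => f 0) (h0.trans h1.symm)
      simp [EuclideanSpace.single_apply] at h2
  · rintro ⟨hfix, hne⟩
    ext x
    simp only [Set.mem_setOf_eq, Set.mem_insert_iff, Set.mem_singleton_iff]
    constructor
    · rintro ⟨hx1, hxfix⟩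
      by_contra hcon
      push_neg at hcon
      obtain ⟨hxv, hxnv⟩ := hcon
      -- v₀ and x are linearly independent
      have hli : LinearIndependent ℝ ![(v₀ : Fin 3 → ℝ), (x : Fin 3 → ℝ)] := by
        rw [linearIndependent_fin2]
        constructor
        · show (x : Fin 3 → ℝ) ≠ 0
          intro h0
          have : x = (0 : EuclideanSpace ℝ (Fin 3)) := by simpa using h0
          rw [this] at hx1; simp at hx1
        · intro a ha
          have hax : a • x = v₀ := WithLp.ofLp_injective 2 (by simpa using ha)
          have : |a| = 1 := by
            have := congrArg norm hax
            rw [norm_smul, hx1, hv₀] at this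
            simpa using this
          rcases abs_eq (by norm_num : (0:ℝ) ≤ 1) |>.1 this with rfl | rfl
          · exact hxv (by simpa using hax)
          · apply hxnv
            rw [← hax]; ext i; simp
      set w : Fin 3 → ℝ := (v₀ : Fin 3 → ℝ) ⨯₃ (x : Fin 3 → ℝ) with hw
      have hwne : w ≠ 0 := crossProduct_ne_zero_iff_linearIndependent.2 hli
      have hMw : M.mulVec w = w := by
        have hkey := cross_key M (v₀ : Fin 3 → ℝ) (x : Fin 3 → ℝ)
        rw [hfix, hxfix, hdet, one_smul, ← hw] at hkey
        calc M.mulVec w = M.mulVec (Mᵀ.mulVec w) := by rw [hkey]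
          _ = (M * Mᵀ).mulVec w := Matrix.mulVec_mulVec _ _ _
          _ = w := by rw [horth, Matrix.one_mulVec]
      have hdet3 : Matrix.det ![(v₀ : Fin 3 → ℝ), (x : Fin 3 → ℝ), w] ≠ 0 := by
        rw [hw, det_rows]
        intro h0
        exact hwne (dotProduct_self_eq_zero.1 (by rw [← hw] at h0; exact h0))
      have : M = 1 := fix_basis M _ _ _ hdet3 hfix hxfix hMw
      exact hne (Subtype.ext this)
    · rintro (rfl | rfl)
      · exact ⟨hv₀, hfix⟩
      · refine ⟨by simpa using hv₀, ?_⟩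
        rw [WithLp.ofLp_neg, Matrix.mulVec_neg, hfix]
end

section
/- Fix a unit vector v₀ ∈ EuclideanSpace ℝ (Fin 3). The subspace SO²(3) := {A ∈ SO(3) | A v₀ = v₀ and A ≠ 1}, with the subspace topology inherited from the space of 3×3 real matrices, is a contractible topological space. -/
open Matrix

noncomputable section SO2Aux

/-- Rational (stereographic) parametrization of rotations about the `x`-axis. -/
def Rrot (t : ℝ) : Matrix (Fin 3) (Fin 3) ℝ :=
  !![1, 0, 0;
     0, (t^2-1)/(t^2+1), -(2*t/(t^2+1));
     0, 2*t/(t^2+1), (t^2-1)/(t^2+1)]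

lemma Rrot_orth (t : ℝ) : star (Rrot t) * Rrot t = 1 := by
  have h : (t:ℝ)^2 + 1 ≠ 0 := by positivity
  ext i j
  fin_cases i <;> fin_cases j <;>
    simp [Rrot, Matrix.mul_apply, Fin.sum_univ_three, Matrix.star_apply,
      Matrix.one_apply, Matrix.vecHead, Matrix.vecTail] <;> field_simp <;> ring

lemma Rrot_det (t : ℝ) : (Rrot t).det = 1 := by
  have h : (t:ℝ)^2 + 1 ≠ 0 := by positivity
  rw [Matrix.det_fin_three]
  simp [Rrot]
  field_simp
  ring

lemma Rrot_mulVec (t : ℝ) : (Rrot t).mulVec ![1,0,0] = ![1,0,0] := by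
  funext i
  fin_cases i <;>
    simp [Rrot, Matrix.mulVec, dotProduct, Fin.sum_univ_three]

lemma Rrot_ne_one (t : ℝ) : Rrot t ≠ 1 := by
  intro h
  have h3 : (t:ℝ)^2 + 1 ≠ 0 := by positivity
  have h2 : ((t^2-1)/(t^2+1) : ℝ) = 1 := by
    have := congrFun (congrFun h 1) 1
    simpa [Rrot, Matrix.one_apply] using this
  rw [div_eq_one_iff_eq h3] at h2
  linarith

/-- Classification: a special orthogonal matrix fixing `e₀` and not the identity
is `Rrot` of its stereographic parameter. -/
lemma classify {B : Matrix (Fin 3) (Fin 3) ℝ} (horth : star B * B = 1)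
    (hdet : B.det = 1) (hfix : B.mulVec ![1,0,0] = ![1,0,0]) (hne : B ≠ 1) :
    B 1 1 ≠ 1 ∧ Rrot (B 2 1 / (1 - B 1 1)) = B := by
  have h00 : B 0 0 = 1 := by
    have := congrFun hfix 0
    simpa [Matrix.mulVec, dotProduct, Fin.sum_univ_three] using this
  have h10 : B 1 0 = 0 := by
    have := congrFun hfix 1
    simpa [Matrix.mulVec, dotProduct, Fin.sum_univ_three] using this
  have h20 : B 2 0 = 0 := by
    have := congrFun hfix 2
    simpa [Matrix.mulVec, dotProduct, Fin.sum_univ_three] using this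
  have o := fun i j => congrFun (congrFun horth i) j
  have o01 : B 0 0 * B 0 1 + B 1 0 * B 1 1 + B 2 0 * B 2 1 = 0 := by
    have := o 0 1
    simpa [Matrix.mul_apply, Fin.sum_univ_three, Matrix.star_apply,
      Matrix.one_apply] using this
  have o02 : B 0 0 * B 0 2 + B 1 0 * B 1 2 + B 2 0 * B 2 2 = 0 := by
    have := o 0 2
    simpa [Matrix.mul_apply, Fin.sum_univ_three, Matrix.star_apply,
      Matrix.one_apply] using this
  have o11 : B 0 1 * B 0 1 + B 1 1 * B 1 1 + B 2 1 * B 2 1 = 1 := by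
    have := o 1 1
    simpa [Matrix.mul_apply, Fin.sum_univ_three, Matrix.star_apply,
      Matrix.one_apply] using this
  have o12 : B 0 1 * B 0 2 + B 1 1 * B 1 2 + B 2 1 * B 2 2 = 0 := by
    have := o 1 2
    simpa [Matrix.mul_apply, Fin.sum_univ_three, Matrix.star_apply,
      Matrix.one_apply] using this
  have h01 : B 0 1 = 0 := by
    have := o01; rw [h00, h10, h20] at this; linarith
  have h02 : B 0 2 = 0 := by
    have := o02; rw [h00, h10, h20] at this; linarith
  have hd : B 1 1 * B 2 2 - B 1 2 * B 2 1 = 1 := by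
    rw [Matrix.det_fin_three] at hdet
    rw [h00, h10, h20, h01, h02] at hdet
    linarith [hdet]
  have hsq : B 1 1 ^ 2 + B 2 1 ^ 2 = 1 := by
    rw [h01] at o11; nlinarith [o11]
  have ho12 : B 1 1 * B 1 2 + B 2 1 * B 2 2 = 0 := by
    rw [h01] at o12; linarith
  have h22 : B 2 2 = B 1 1 := by
    linear_combination (-(B 2 2)) * hsq + (B 1 1) * hd + (B 2 1) * ho12
  have h12 : B 1 2 = - B 2 1 := by
    linear_combination (-(B 1 2)) * hsq + (B 1 1) * ho12 - (B 2 1) * hd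
  have ha : B 1 1 ≠ 1 := by
    intro h1
    apply hne
    have hc : B 2 1 = 0 := by nlinarith [hsq]
    ext i j
    fin_cases i <;> fin_cases j <;>
      simp [h00, h01, h02, h10, h20, h1, hc, h22, h12, Matrix.one_apply]
  have h1a : (1:ℝ) - B 1 1 ≠ 0 := sub_ne_zero.mpr (Ne.symm ha)
  refine ⟨ha, ?_⟩
  set t := B 2 1 / (1 - B 1 1) with ht
  have ht2 : t^2 + 1 ≠ 0 := by positivity
  have hc2 : B 2 1 ^ 2 = (1 - B 1 1) * (1 + B 1 1) := by linear_combination hsq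
  have htt : t^2 = (1 + B 1 1)/(1 - B 1 1) := by
    rw [ht, div_pow, hc2, sq]
    field_simp
  have hden : t^2 + 1 = 2/(1 - B 1 1) := by
    rw [htt]
    field_simp
    ring
  have hkey : (t^2 - 1)/(t^2 + 1) = B 1 1 := by
    rw [htt]
    field_simp
    ring
  have hkey2 : 2*t/(t^2 + 1) = B 2 1 := by
    rw [hden, ht]
    field_simp
  ext i j
  fin_cases i <;> fin_cases j <;>
    simp [Rrot, Matrix.vecHead, Matrix.vecTail, h00, h01, h02, h10, h20,
      h22, h12, hkey, hkey2]

end SO2Aux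

section conjAux

variable {Q M : Matrix (Fin 3) (Fin 3) ℝ}

lemma conj_orth (hQ : star Q * Q = 1) (hQ2 : Q * star Q = 1)
    (hM : star M * M = 1) :
    star (Q * M * star Q) * (Q * M * star Q) = 1 := by
  have hstar : star (Q * M * star Q) = Q * (star M * star Q) := by
    rw [StarMul.star_mul, star_star, StarMul.star_mul]
  rw [hstar]
  have e1 : star Q * (Q * (M * star Q)) = M * star Q := by
    rw [← mul_assoc, hQ, one_mul]
  have e2 : star M * (M * star Q) = star Q := by
    rw [← mul_assoc, hM, one_mul]
  calc Q * (star M * star Q) * (Q * M * star Q)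
      = Q * (star M * (star Q * (Q * (M * star Q)))) := by
        simp only [mul_assoc]
    _ = 1 := by rw [e1, e2, hQ2]

lemma conj_det (hQ2 : Q * star Q = 1) (hM : M.det = 1) :
    (Q * M * star Q).det = 1 := by
  rw [Matrix.det_mul, Matrix.det_mul, hM, mul_one, ← Matrix.det_mul, hQ2,
    Matrix.det_one]

lemma cancel1 (_hQ : star Q * Q = 1) (hQ2 : Q * star Q = 1) (M : Matrix (Fin 3) (Fin 3) ℝ) :
    Q * (star Q * M * Q) * star Q = M := by
  simp only [← mul_assoc]
  rw [hQ2, one_mul, mul_assoc, hQ2, mul_one]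

lemma cancel2 (hQ : star Q * Q = 1) (_hQ2 : Q * star Q = 1) (M : Matrix (Fin 3) (Fin 3) ℝ) :
    star Q * (Q * M * star Q) * Q = M := by
  simp only [← mul_assoc]
  rw [hQ, one_mul, mul_assoc, hQ, mul_one]

end conjAux



/-- The space `SO²(3)` of non-identity rotations about the axis through a fixed unit
vector `v₀`, with the subspace topology inherited from the `3 × 3` real matrices,
is contractible. -/
theorem SO2_of_3_contractible
    (v₀ : EuclideanSpace ℝ (Fin 3)) (hv₀ : ‖v₀‖ = 1) :
    ContractibleSpace {A : Matrix.specialOrthogonalGroup (Fin 3) ℝ //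
      (A : Matrix (Fin 3) (Fin 3) ℝ).mulVec v₀ = v₀ ∧ A ≠ 1} := by
  classical
  -- extend v₀ to an orthonormal basis
  have hv : Orthonormal ℝ (Set.restrict {0} fun _ : Fin 3 => v₀) := by
    constructor
    · intro i; exact hv₀
    · intro i j hij
      exact absurd (Subtype.ext ((Set.mem_singleton_iff.mp i.2).trans
        (Set.mem_singleton_iff.mp j.2).symm)) hij
  obtain ⟨b, hb⟩ := hv.exists_orthonormalBasis_extension_of_card_eq (by simp)
  have hb0 : b 0 = v₀ := hb 0 rfl
  set Q : Matrix (Fin 3) (Fin 3) ℝ := Matrix.of fun i j => b j i with hQdef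
  have hQ : star Q * Q = 1 := by
    ext i j
    have h := orthonormal_iff_ite.mp b.orthonormal i j
    simp only [PiLp.inner_apply, RCLike.inner_apply, conj_trivial] at h
    simpa [Matrix.mul_apply, Matrix.star_apply, Matrix.one_apply, hQdef, mul_comm] using h
  have hQ2 : Q * star Q = 1 := mul_eq_one_comm.mp hQ
  have hQe : Q.mulVec ![1,0,0] = (v₀ : Fin 3 → ℝ) := by
    funext i
    simp [Matrix.mulVec, dotProduct, Fin.sum_univ_three, hQdef, hb0]
  have hQv : (star Q).mulVec (v₀ : Fin 3 → ℝ) = ![1,0,0] := by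
    rw [← hQe, Matrix.mulVec_mulVec, hQ, Matrix.one_mulVec]
  -- membership facts for the inverse map
  have hmemG : ∀ t : ℝ, Q * Rrot t * star Q ∈ Matrix.specialOrthogonalGroup (Fin 3) ℝ :=
    fun t => Matrix.mem_specialOrthogonalGroup_iff.mpr
      ⟨(Matrix.mem_orthogonalGroup_iff' (Fin 3) ℝ).mpr (conj_orth hQ hQ2 (Rrot_orth t)),
        conj_det hQ2 (Rrot_det t)⟩
  have hfixG : ∀ t : ℝ, (Q * Rrot t * star Q).mulVec v₀ = v₀ := by
    intro t
    show (Q * Rrot t * star Q).mulVec (v₀ : Fin 3 → ℝ) = (v₀ : Fin 3 → ℝ)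
    rw [← Matrix.mulVec_mulVec, ← Matrix.mulVec_mulVec, hQv, Rrot_mulVec, hQe]
  have hneG : ∀ t : ℝ,
      (⟨Q * Rrot t * star Q, hmemG t⟩ : Matrix.specialOrthogonalGroup (Fin 3) ℝ) ≠ 1 := by
    intro t h
    apply Rrot_ne_one t
    have h' : Q * Rrot t * star Q = 1 := congrArg Subtype.val h
    rw [← cancel2 hQ hQ2 (Rrot t), h', mul_one, hQ]
  -- facts about elements of the space
  have hclass : ∀ A : {A : Matrix.specialOrthogonalGroup (Fin 3) ℝ //
      (A : Matrix (Fin 3) (Fin 3) ℝ).mulVec v₀ = v₀ ∧ A ≠ 1},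
      (star Q * (A.1 : Matrix (Fin 3) (Fin 3) ℝ) * Q) 1 1 ≠ 1 ∧
      Rrot ((star Q * (A.1 : Matrix (Fin 3) (Fin 3) ℝ) * Q) 2 1 /
        (1 - (star Q * (A.1 : Matrix (Fin 3) (Fin 3) ℝ) * Q) 1 1)) =
        star Q * (A.1 : Matrix (Fin 3) (Fin 3) ℝ) * Q := by
    intro A
    set M : Matrix (Fin 3) (Fin 3) ℝ := (A.1 : Matrix (Fin 3) (Fin 3) ℝ) with hM
    have hMorth : star M * M = 1 := A.1.2.1.1
    have hMdet : M.det = 1 := A.1.2.2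
    have horthB : star (star Q * M * Q) * (star Q * M * Q) = 1 := by
      have := conj_orth (Q := star Q) (by rwa [star_star]) (by rwa [star_star]) hMorth
      rwa [star_star] at this
    have hdetB : (star Q * M * Q).det = 1 := by
      have := conj_det (Q := star Q) (by rwa [star_star]) hMdet
      rwa [star_star] at this
    have hfixB : (star Q * M * Q).mulVec ![1,0,0] = ![1,0,0] := by
      rw [← Matrix.mulVec_mulVec, ← Matrix.mulVec_mulVec, hQe]
      rw [show M.mulVec (v₀ : Fin 3 → ℝ) = (v₀ : Fin 3 → ℝ) from A.2.1, hQv]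
    have hneB : star Q * M * Q ≠ 1 := by
      intro h
      apply A.2.2
      have : M = 1 := by
        rw [← cancel1 hQ hQ2 M, h, mul_one, hQ2]
      exact Subtype.ext this
    exact classify horthB hdetB hfixB hneB
  haveI : ContractibleSpace ℝ := inferInstance
  refine Homeomorph.contractibleSpace (Y := ℝ)
    (Homeomorph.mk
      { toFun := fun A => (star Q * (A.1 : Matrix (Fin 3) (Fin 3) ℝ) * Q) 2 1 /
            (1 - (star Q * (A.1 : Matrix (Fin 3) (Fin 3) ℝ) * Q) 1 1)
        invFun := fun t => ⟨⟨Q * Rrot t * star Q, hmemG t⟩, hfixG t, hneG t⟩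
        left_inv := ?_
        right_inv := ?_ } ?_ ?_)
  · intro A
    apply Subtype.ext
    apply Subtype.ext
    show Q * Rrot _ * star Q = (A.1 : Matrix (Fin 3) (Fin 3) ℝ)
    rw [(hclass A).2, cancel1 hQ hQ2]
  · intro t
    have hB : star Q * (Q * Rrot t * star Q) * Q = Rrot t := cancel2 hQ hQ2 _
    show (star Q * (Q * Rrot t * star Q) * Q) 2 1 /
        (1 - (star Q * (Q * Rrot t * star Q) * Q) 1 1) = t
    rw [hB]
    have h3 : (t:ℝ)^2 + 1 ≠ 0 := by positivity
    have h21 : Rrot t 2 1 = 2*t/(t^2+1) := by simp [Rrot]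
    have h11 : Rrot t 1 1 = (t^2-1)/(t^2+1) := by simp [Rrot]
    rw [h21, h11]
    have hden : 1 - (t^2-1)/(t^2+1) = 2/(t^2+1) := by
      field_simp
      ring
    rw [hden, div_eq_iff (by positivity : (2:ℝ)/(t^2+1) ≠ 0)]
    field_simp
  · have hcoe : Continuous fun A : {A : Matrix.specialOrthogonalGroup (Fin 3) ℝ //
        (A : Matrix (Fin 3) (Fin 3) ℝ).mulVec v₀ = v₀ ∧ A ≠ 1} =>
        (A.1 : Matrix (Fin 3) (Fin 3) ℝ) :=
      continuous_subtype_val.comp continuous_subtype_val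
    have hcont : Continuous fun A : {A : Matrix.specialOrthogonalGroup (Fin 3) ℝ //
        (A : Matrix (Fin 3) (Fin 3) ℝ).mulVec v₀ = v₀ ∧ A ≠ 1} =>
        star Q * (A.1 : Matrix (Fin 3) (Fin 3) ℝ) * Q :=
      (continuous_const.matrix_mul hcoe).matrix_mul continuous_const
    exact Continuous.div (hcont.matrix_elem 2 1)
      (continuous_const.sub (hcont.matrix_elem 1 1))
      (fun A => sub_ne_zero.mpr (Ne.symm (hclass A).1))
  · have c1 : Continuous fun t : ℝ => (t^2-1)/(t^2+1) :=
      Continuous.div (by fun_prop) (by fun_prop) (fun t => by positivity)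
    have c2 : Continuous fun t : ℝ => 2*t/(t^2+1) :=
      Continuous.div (by fun_prop) (by fun_prop) (fun t => by positivity)
    have hR : Continuous Rrot := by
      apply continuous_matrix
      intro i j
      fin_cases i <;> fin_cases j <;>
        simp only [Rrot, Matrix.cons_val', Matrix.cons_val_zero, Matrix.cons_val_one,
          Matrix.head_cons, Matrix.head_fin_const, Matrix.empty_val',
          Matrix.cons_val_fin_one, Matrix.cons_val_two, Matrix.tail_cons] <;>
        first
          | exact continuous_const
          | exact c1
          | exact c2
          | exact c2.neg
    have hG0 : Continuous fun t : ℝ => Q * Rrot t * star Q :=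
      (continuous_const.matrix_mul hR).matrix_mul continuous_const
    exact (hG0.subtype_mk _).subtype_mk _
end

section
/- Fix a unit vector v₀ ∈ EuclideanSpace ℝ (Fin 3). The stabilizer subgroup {A ∈ SO(3) | A v₀ = v₀}, with the subspace topology inherited from the space of 3×3 real matrices, is homeomorphic to the circle group (the unit circle in ℂ). -/
open Matrix Complex

noncomputable section SO3Aux

private def rotM (z : Circle) : Matrix (Fin 3) (Fin 3) ℝ :=
  !![(z:ℂ).re, -(z:ℂ).im, 0; (z:ℂ).im, (z:ℂ).re, 0; (0:ℝ), 0, 1]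

private lemma circle_sq (z : Circle) : (z:ℂ).re ^ 2 + (z:ℂ).im ^ 2 = 1 := by
  have h := Circle.norm_coe z
  have := Complex.sq_norm (z:ℂ)
  rw [h] at this
  simp [Complex.normSq_apply] at this
  nlinarith [this]

private lemma rotM_orth (z : Circle) : star (rotM z) * rotM z = 1 := by
  have h := circle_sq z
  ext i j
  fin_cases i <;> fin_cases j <;>
    simp [rotM, Matrix.mul_apply, Fin.sum_univ_three, Matrix.star_apply, Matrix.one_apply] <;>
    nlinarith [h]

private lemma rotM_det (z : Circle) : (rotM z).det = 1 := by
  have h := circle_sq z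
  rw [Matrix.det_fin_three]
  simp [rotM]
  nlinarith [h]

private lemma rotM_single (z : Circle) : rotM z *ᵥ Pi.single 2 1 = Pi.single 2 1 := by
  rw [Matrix.mulVec_single]
  ext i
  fin_cases i <;> simp [rotM]

private lemma rotM_mk (x y : ℝ) (h : ((x:ℂ) + (y:ℂ) * Complex.I) ∈ Submonoid.unitSphere ℂ) :
    rotM ⟨(x:ℂ) + (y:ℂ) * Complex.I, h⟩ = !![x, -y, 0; y, x, 0; 0, 0, 1] := by
  ext i j
  fin_cases i <;> fin_cases j <;> simp [rotM]

end SO3Aux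

section SO3Aux2
open Matrix Complex

private lemma stab_entries (B : Matrix (Fin 3) (Fin 3) ℝ)
    (h1 : star B * B = 1) (h2 : B * star B = 1) (hdet : B.det = 1)
    (hB : B *ᵥ Pi.single 2 1 = Pi.single 2 1) :
    (B 0 0) ^ 2 + (B 1 0) ^ 2 = 1 ∧
      B = !![B 0 0, -(B 1 0), 0; B 1 0, B 0 0, 0; 0, 0, 1] := by
  have hcol : ∀ i, B i 2 = (Pi.single (2 : Fin 3) (1:ℝ) : Fin 3 → ℝ) i := by
    intro i
    have := congrFun hB i
    rw [Matrix.mulVec_single] at this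
    simpa using this
  have h02 : B 0 2 = 0 := by simpa using hcol 0
  have h12 : B 1 2 = 0 := by simpa using hcol 1
  have h22 : B 2 2 = 1 := by simpa using hcol 2
  -- row 2 of B has norm 1
  have hrow := congrFun (congrFun h2 2) 2
  simp [Matrix.mul_apply, Fin.sum_univ_three, Matrix.star_apply, Matrix.one_apply, h22] at hrow
  have h20 : B 2 0 = 0 := by nlinarith [hrow, sq_nonneg (B 2 0), sq_nonneg (B 2 1)]
  have h21 : B 2 1 = 0 := by nlinarith [hrow, sq_nonneg (B 2 0), sq_nonneg (B 2 1)]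
  -- column relations
  have hc00 := congrFun (congrFun h1 0) 0
  have hc01 := congrFun (congrFun h1 0) 1
  simp [Matrix.mul_apply, Fin.sum_univ_three, Matrix.star_apply, Matrix.one_apply, h20, h21] at hc00 hc01
  -- determinant
  rw [Matrix.det_fin_three] at hdet
  rw [h02, h12, h22, h20, h21] at hdet
  ring_nf at hdet
  set a := B 0 0
  set b := B 0 1
  set c := B 1 0
  set d := B 1 1
  have hsq : a ^ 2 + c ^ 2 = 1 := by nlinarith [hc00]
  have hdet' : a * d - b * c = 1 := by linarith [hdet]
  have hperp : a * b + c * d = 0 := by linarith [hc01]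
  have hd : d = a := by linear_combination a * hdet' + c * hperp - d * hsq
  have hb : b = -c := by linear_combination -b * hsq + a * hperp - c * hdet'
  refine ⟨hsq, ?_⟩
  ext i j
  fin_cases i <;> fin_cases j <;>
    simp [h02, h12, h22, h20, h21]
  · rfl
  · exact hb
  · rfl
  · exact hd

end SO3Aux2
/-- The stabilizer in `SO(3)` of a unit vector `v₀`, with the subspace topology
inherited from the `3 × 3` real matrices, is homeomorphic to the circle group. -/
theorem SO3_stabilizer_homeomorph_circle
    (v₀ : EuclideanSpace ℝ (Fin 3)) (hv₀ : ‖v₀‖ = 1) :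
    Nonempty ({A : Matrix.specialOrthogonalGroup (Fin 3) ℝ //
      (A : Matrix (Fin 3) (Fin 3) ℝ).mulVec v₀ = v₀} ≃ₜ Circle) := by
  classical
  -- obtain an orthonormal basis whose third vector is `v₀`
  have hcard : Module.finrank ℝ (EuclideanSpace ℝ (Fin 3)) = Fintype.card (Fin 3) := by simp
  have horth : Orthonormal ℝ (Set.restrict ({2} : Set (Fin 3)) (fun _ => v₀)) := by
    constructor
    · intro i; exact hv₀
    · intro i j hij
      exact absurd (Subtype.ext ((Set.mem_singleton_iff.mp i.2).trans
        (Set.mem_singleton_iff.mp j.2).symm)) hij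
  obtain ⟨b, hb⟩ := horth.exists_orthonormalBasis_extension_of_card_eq hcard
  have hb2 : b 2 = v₀ := hb 2 rfl
  set Q : Matrix (Fin 3) (Fin 3) ℝ := Matrix.of fun i j => b j i with hQdef
  have key : ∀ j k, ∑ i, b j i * b k i = if j = k then (1:ℝ) else 0 := by
    intro j k
    have h := b.orthonormal
    rw [orthonormal_iff_ite] at h
    have h2 := h j k
    simpa [PiLp.inner_apply, RCLike.inner_apply, conj_trivial, mul_comm] using h2
  have hQ : star Q * Q = 1 := by
    ext j k
    simp only [Matrix.mul_apply, Matrix.star_apply, star_trivial, Matrix.one_apply,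
      hQdef, Matrix.of_apply]
    exact key j k
  have hQ' : Q * star Q = 1 := mul_eq_one_comm.mp hQ
  have hQe : Q *ᵥ Pi.single 2 1 = v₀ := by
    rw [Matrix.mulVec_single]
    funext i
    simp [hQdef, ← hb2]
  have hQv : star Q *ᵥ v₀ = Pi.single 2 1 := by
    rw [← hQe, Matrix.mulVec_mulVec, hQ, Matrix.one_mulVec]
  -- conjugation preserves orthogonality
  have conj_orth : ∀ (P M : Matrix (Fin 3) (Fin 3) ℝ), star P * P = 1 → P * star P = 1 →
      star M * M = 1 → star (P * M * star P) * (P * M * star P) = 1 := by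
    intro P M hP1 hP2 hM
    have h1 : star (P * M * star P) = P * (star M * star P) := by
      simp [StarMul.star_mul, mul_assoc]
    rw [h1, show P * (star M * star P) * (P * M * star P)
        = P * (star M * ((star P * P) * (M * star P))) from by simp only [mul_assoc], hP1,
      one_mul, show star M * (M * star P) = (star M * M) * star P from (mul_assoc _ _ _).symm,
      hM, one_mul, hP2]
  have hdetQ : Q.det * (star Q).det = 1 := by
    rw [← Matrix.det_mul, hQ', Matrix.det_one]
  -- the conjugated rotation matrices lie in SO(3) and stabilize v₀
  have memSO : ∀ z : Circle, Q * rotM z * star Q ∈ Matrix.specialOrthogonalGroup (Fin 3) ℝ := by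
    intro z
    rw [Matrix.mem_specialOrthogonalGroup_iff]
    refine ⟨(Matrix.mem_orthogonalGroup_iff' _ _).mpr (conj_orth Q (rotM z) hQ hQ' (rotM_orth z)), ?_⟩
    rw [Matrix.det_mul, Matrix.det_mul, rotM_det z, mul_one]
    exact hdetQ
  have stab : ∀ z : Circle, (Q * rotM z * star Q) *ᵥ v₀ = v₀ := by
    intro z
    rw [← Matrix.mulVec_mulVec, ← Matrix.mulVec_mulVec, hQv, rotM_single, hQe]
  -- structure of conjugated stabilizer elements
  have keyB : ∀ (A : {A : Matrix.specialOrthogonalGroup (Fin 3) ℝ //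
      (A : Matrix (Fin 3) (Fin 3) ℝ).mulVec v₀ = v₀}),
      ((star Q * (A : Matrix (Fin 3) (Fin 3) ℝ) * Q) 0 0) ^ 2
        + ((star Q * (A : Matrix (Fin 3) (Fin 3) ℝ) * Q) 1 0) ^ 2 = 1 ∧
      star Q * (A : Matrix (Fin 3) (Fin 3) ℝ) * Q =
        !![(star Q * (A : Matrix (Fin 3) (Fin 3) ℝ) * Q) 0 0,
            -((star Q * (A : Matrix (Fin 3) (Fin 3) ℝ) * Q) 1 0), 0;
          (star Q * (A : Matrix (Fin 3) (Fin 3) ℝ) * Q) 1 0,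
            (star Q * (A : Matrix (Fin 3) (Fin 3) ℝ) * Q) 0 0, 0;
          0, 0, 1] := by
    intro A
    obtain ⟨hAorth, hAdet⟩ := Matrix.mem_specialOrthogonalGroup_iff.mp A.1.2
    have hA1 : star (A : Matrix (Fin 3) (Fin 3) ℝ) * (A : Matrix (Fin 3) (Fin 3) ℝ) = 1 :=
      (Matrix.mem_orthogonalGroup_iff' _ _).mp hAorth
    have hB1 : star (star Q * (A : Matrix (Fin 3) (Fin 3) ℝ) * Q)
        * (star Q * (A : Matrix (Fin 3) (Fin 3) ℝ) * Q) = 1 := by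
      have := conj_orth (star Q) (A : Matrix (Fin 3) (Fin 3) ℝ) (by rw [star_star]; exact hQ')
        (by rw [star_star]; exact hQ) hA1
      rwa [star_star] at this
    have hB2 : (star Q * (A : Matrix (Fin 3) (Fin 3) ℝ) * Q)
        * star (star Q * (A : Matrix (Fin 3) (Fin 3) ℝ) * Q) = 1 :=
      mul_eq_one_comm.mp hB1
    have hBdet : (star Q * (A : Matrix (Fin 3) (Fin 3) ℝ) * Q).det = 1 := by
      rw [Matrix.det_mul, Matrix.det_mul, hAdet, mul_one, mul_comm]
      exact hdetQ
    have hBfix : (star Q * (A : Matrix (Fin 3) (Fin 3) ℝ) * Q) *ᵥ Pi.single 2 1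
        = Pi.single 2 1 := by
      rw [← Matrix.mulVec_mulVec, ← Matrix.mulVec_mulVec, hQe, A.2, hQv]
    exact stab_entries _ hB1 hB2 hBdet hBfix
  -- the homeomorphism
  refine ⟨Homeomorph.mk (Equiv.mk
    (fun A => ⟨((star Q * (A : Matrix (Fin 3) (Fin 3) ℝ) * Q) 0 0 : ℝ)
        + ((star Q * (A : Matrix (Fin 3) (Fin 3) ℝ) * Q) 1 0 : ℝ) * Complex.I, ?_⟩)
    (fun z => ⟨⟨Q * rotM z * star Q, memSO z⟩, stab z⟩) ?_ ?_) ?_ ?_⟩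
  · -- membership in the circle
    show _ ∈ Metric.sphere (0:ℂ) 1
    rw [mem_sphere_zero_iff_norm, Complex.norm_def,
      Complex.normSq_add_mul_I, (keyB A).1, Real.sqrt_one]
  · -- left inverse
    intro A
    obtain ⟨hsq, hform⟩ := keyB A
    refine Subtype.ext (Subtype.ext ?_)
    show Q * rotM _ * star Q = (A : Matrix (Fin 3) (Fin 3) ℝ)
    rw [rotM_mk, ← hform,
      show Q * (star Q * (A : Matrix (Fin 3) (Fin 3) ℝ) * Q) * star Q
        = (Q * star Q) * (A : Matrix (Fin 3) (Fin 3) ℝ) * (Q * star Q) from by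
          simp only [mul_assoc],
      hQ', one_mul, mul_one]
  · -- right inverse
    intro z
    have hmid : star Q * (Q * rotM z * star Q) * Q = rotM z := by
      rw [show star Q * (Q * rotM z * star Q) * Q
          = (star Q * Q) * rotM z * (star Q * Q) from by simp only [mul_assoc],
        hQ, one_mul, mul_one]
    apply Circle.ext
    show (((star Q * (Q * rotM z * star Q) * Q) 0 0 : ℝ) : ℂ)
        + (((star Q * (Q * rotM z * star Q) * Q) 1 0 : ℝ) : ℂ) * Complex.I = (z : ℂ)
    rw [hmid]
    simp [rotM]
  · -- continuity of toFun
    have cval : Continuous fun (A : {A : Matrix.specialOrthogonalGroup (Fin 3) ℝ //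
        (A : Matrix (Fin 3) (Fin 3) ℝ).mulVec v₀ = v₀}) => (A : Matrix (Fin 3) (Fin 3) ℝ) :=
      continuous_subtype_val.comp continuous_subtype_val
    have cB : Continuous fun (A : {A : Matrix.specialOrthogonalGroup (Fin 3) ℝ //
        (A : Matrix (Fin 3) (Fin 3) ℝ).mulVec v₀ = v₀}) =>
        star Q * (A : Matrix (Fin 3) (Fin 3) ℝ) * Q :=
      (continuous_const.matrix_mul cval).matrix_mul continuous_const
    exact Continuous.subtype_mk
      ((Complex.continuous_ofReal.comp (cB.matrix_elem 0 0)).add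
        ((Complex.continuous_ofReal.comp (cB.matrix_elem 1 0)).mul continuous_const)) _
  · -- continuity of invFun
    have ccoe : Continuous fun z : Circle => (z : ℂ) := continuous_subtype_val
    have crot : Continuous rotM := by
      apply continuous_matrix
      intro i j
      fin_cases i <;> fin_cases j <;> simp only [rotM, Matrix.cons_val', Matrix.cons_val_zero,
        Matrix.cons_val_one, Matrix.head_cons, Matrix.empty_val', Matrix.cons_val_fin_one,
        Matrix.head_fin_const, Fin.isValue, Matrix.of_apply]
      all_goals first
        | exact continuous_const
        | exact Complex.continuous_re.comp ccoe
        | exact Complex.continuous_im.comp ccoe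
        | exact (Complex.continuous_im.comp ccoe).neg
    have cinv : Continuous fun z : Circle => Q * rotM z * star Q :=
      (continuous_const.matrix_mul crot).matrix_mul continuous_const
    exact Continuous.subtype_mk (Continuous.subtype_mk cinv _) _
end
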